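/- arXiv:1905.02834 — 4 statements merged into one kernel-verified Lean document; each statement's English description precedes it below -/
import Mathlib

section
/- If U(n) is not cyclic but contains an element of order φ(n)/2, then U(n) is isomorphic to (ℤ/n₁ℤ) × (ℤ/n₂ℤ) for some positive integers n₁, n₂ with gcd(n₁, n₂) = 2. -/
section Aux

variable {G : Type*} [CommGroup G]

lemma aux_isCyclic_zpowers (x : G) : IsCyclic (Subgroup.zpowers x) := by
  refine ⟨⟨⟨x, Subgroup.mem_zpowers x⟩, ?_⟩⟩
  rintro ⟨z, k, rfl⟩
  exact ⟨k, by ext; simp⟩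

/-- Key structural lemma: a finite noncyclic abelian group of order `2*m`
with an element of order `m` is `Z_m × Z_2`. -/
lemma aux_struct [Fintype G] (m : ℕ) (hm0 : 0 < m)
    (hcard : Fintype.card G = 2 * m)
    (hnc : ¬ IsCyclic G) (x : G) (hx : orderOf x = m) :
    ∃ n₁ n₂ : ℕ, 0 < n₁ ∧ 0 < n₂ ∧ Nat.gcd n₁ n₂ = 2 ∧
      Nonempty (G ≃* (Multiplicative (ZMod n₁) × Multiplicative (ZMod n₂))) := by
  have hncard : Nat.card G = 2 * m := by rw [Nat.card_eq_fintype_card, hcard]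
  -- exponent is m
  have hdvd1 : m ∣ Monoid.exponent G := hx ▸ Monoid.order_dvd_exponent x
  have hdvd2 : Monoid.exponent G ∣ 2 * m := hcard ▸ Group.exponent_dvd_card
  have hexp : Monoid.exponent G = m := by
    obtain ⟨k, hk⟩ := hdvd1
    have hkdvd : k ∣ 2 := by
      have : m * k ∣ m * 2 := by rw [← hk, Nat.mul_comm m 2]; exact hdvd2
      exact (Nat.mul_dvd_mul_iff_left hm0).mp this
    rcases (Nat.prime_two.eq_one_or_self_of_dvd k hkdvd) with rfl | rfl
    · omega
    · exfalso
      obtain ⟨g, hg⟩ := Monoid.exists_orderOf_eq_exponent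
        (Monoid.ExponentExists.of_finite : Monoid.ExponentExists G)
      exact hnc (isCyclic_of_orderOf_eq_card g (by rw [hg, hncard, hk]; ring))
  -- m is even
  have htwo : 2 ∣ m := by
    obtain ⟨t, ht⟩ := exists_prime_orderOf_dvd_card 2 (by rw [hcard]; exact ⟨m, rfl⟩)
    exact hexp ▸ ht ▸ Monoid.order_dvd_exponent t
  set H := Subgroup.zpowers x with hH
  have hcardH : Nat.card H = m := by rw [Nat.card_zpowers, hx]
  -- pick g outside H
  have hHne : ∃ g : G, g ∉ H := by
    by_contra hc
    push_neg at hc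
    have htop : H = ⊤ := (Subgroup.eq_top_iff' H).mpr hc
    have h' : Nat.card H = Nat.card G := by rw [htop]; exact Subgroup.card_top
    omega
  obtain ⟨g, hg⟩ := hHne
  -- H has index 2
  have hidx : H.index = 2 := by
    have h := Subgroup.card_mul_index H
    rw [hcardH, hncard] at h
    have : m * H.index = m * 2 := by omega
    exact Nat.eq_of_mul_eq_mul_left hm0 this
  have hg2 : g ^ 2 ∈ H := hidx ▸ Subgroup.pow_index_mem H g
  obtain ⟨k, hk⟩ := Subgroup.mem_zpowers_iff.mp hg2
  -- k is even
  have hgm : g ^ m = 1 := hexp ▸ Monoid.pow_exponent_eq_one g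
  have hkeven : (2 : ℤ) ∣ k := by
    have h1 : x ^ (k * (m / 2 : ℕ)) = 1 := by
      rw [zpow_mul, hk, zpow_natCast, ← pow_mul]
      rw [show 2 * (m / 2) = m from by omega, hgm]
    have h2 : ((orderOf x : ℕ) : ℤ) ∣ k * (m / 2 : ℕ) :=
      orderOf_dvd_iff_zpow_eq_one.mpr h1
    rw [hx] at h2
    have hm2 : (m : ℤ) = 2 * ((m / 2 : ℕ) : ℤ) := by
      push_cast; omega
    rw [hm2] at h2
    have hpos : ((m / 2 : ℕ) : ℤ) ≠ 0 := by
      simp only [ne_eq, Nat.cast_eq_zero]; omega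
    obtain ⟨c, hc⟩ := h2
    refine ⟨c, ?_⟩
    have : ((m / 2 : ℕ) : ℤ) * k = ((m / 2 : ℕ) : ℤ) * (2 * c) := by ring_nf; linarith [hc]
    exact mul_left_cancel₀ hpos this
  obtain ⟨j, hj⟩ := hkeven
  set y := g * x ^ (-j) with hy
  have hy2 : y ^ 2 = 1 := by
    rw [hy, mul_pow, ← zpow_natCast (x ^ (-j)), ← zpow_mul, ← hk, ← zpow_add]
    have hexp0 : k + -j * ((2:ℕ):ℤ) = 0 := by push_cast; omega
    rw [hexp0, zpow_zero]
  have hyH : y ∉ H := by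
    intro hmem
    apply hg
    have : g = y * x ^ j := by rw [hy]; group
    rw [this]
    exact H.mul_mem hmem (Subgroup.zpow_mem H (Subgroup.mem_zpowers x) j)
  have hyne : y ≠ 1 := fun h => hyH (h ▸ H.one_mem)
  have hoy : orderOf y = 2 := orderOf_eq_prime hy2 hyne
  set K := Subgroup.zpowers y with hK
  have hcardK : Nat.card K = 2 := by rw [Nat.card_zpowers, hoy]
  -- intersection trivial
  have hinter : ∀ z : G, z ∈ H → z ∈ K → z = 1 := by
    intro z hzH hzK
    obtain ⟨c, rfl⟩ := Subgroup.mem_zpowers_iff.mp hzK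
    have hy2' : y ^ (2:ℤ) = 1 := by
      rw [show (2:ℤ) = ((2:ℕ):ℤ) from rfl, zpow_natCast, hy2]
    rcases Int.even_or_odd c with ⟨d, hd⟩ | ⟨d, hd⟩
    · rw [hd, ← two_mul, zpow_mul, hy2', one_zpow]
    · exfalso
      apply hyH
      have hzy : y ^ c = y := by
        rw [hd, zpow_add, zpow_mul, hy2', one_zpow, one_mul, zpow_one]
      rw [hzy] at hzH
      exact hzH
  -- build the isomorphism
  have hHc : IsCyclic H := aux_isCyclic_zpowers x
  have hKc : IsCyclic K := aux_isCyclic_zpowers y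
  let e₁ : Multiplicative (ZMod (Nat.card H)) ≃* H := zmodCyclicMulEquiv hHc
  let e₂ : Multiplicative (ZMod (Nat.card K)) ≃* K := zmodCyclicMulEquiv hKc
  let f₁ : Multiplicative (ZMod (Nat.card H)) →* G := H.subtype.comp e₁.toMonoidHom
  let f₂ : Multiplicative (ZMod (Nat.card K)) →* G := K.subtype.comp e₂.toMonoidHom
  have hf₁mem : ∀ a, f₁ a ∈ H := fun a => (e₁ a).2
  have hf₂mem : ∀ b, f₂ b ∈ K := fun b => (e₂ b).2
  have hf₁inj : Function.Injective f₁ := H.subtype_injective.comp e₁.injective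
  have hf₂inj : Function.Injective f₂ := K.subtype_injective.comp e₂.injective
  let f := f₁.coprod f₂
  have hinj : Function.Injective f := by
    rw [injective_iff_map_eq_one]
    rintro ⟨a, b⟩ hab
    have hab' : f₁ a * f₂ b = 1 := hab
    have h1 : f₁ a = (f₂ b)⁻¹ := by
      rw [eq_inv_iff_mul_eq_one]; exact hab'
    have hfa : f₁ a = 1 := hinter _ (hf₁mem a) (h1 ▸ K.inv_mem (hf₂mem b))
    have hfb : f₂ b = 1 := by
      rw [hfa, one_mul] at hab'; exact hab'
    have ha : a = 1 := hf₁inj (by rw [hfa, map_one])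
    have hb : b = 1 := hf₂inj (by rw [hfb, map_one])
    rw [ha, hb]; rfl
  have hbij : Function.Bijective f := by
    refine (Nat.bijective_iff_injective_and_card f).mpr ⟨hinj, ?_⟩
    have hq : ∀ q : ℕ, Nat.card (Multiplicative (ZMod q)) = q := fun q => by
      rw [Nat.card_congr Multiplicative.toAdd, Nat.card_zmod]
    rw [Nat.card_prod, hq, hq, hcardH, hcardK, hncard]
    ring
  refine ⟨Nat.card H, Nat.card K, by omega, by omega, ?_, ⟨(MulEquiv.ofBijective f hbij).symm⟩⟩
  rw [hcardH, hcardK, Nat.gcd_comm]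
  exact Nat.gcd_eq_left htwo

end Aux

/-- If U(n) is not cyclic but has an element of order φ(n)/2, then
U(n) ≅ (ℤ/n₁ℤ) × (ℤ/n₂ℤ) with gcd(n₁, n₂) = 2. -/
theorem stmt_7 (n : ℕ) (h1 : ¬ IsCyclic (ZMod n)ˣ)
    (h2 : ∃ x : (ZMod n)ˣ, orderOf x = Nat.totient n / 2) :
    ∃ n₁ n₂ : ℕ, 0 < n₁ ∧ 0 < n₂ ∧ Nat.gcd n₁ n₂ = 2 ∧
      Nonempty ((ZMod n)ˣ ≃*
        (Multiplicative (ZMod n₁) × Multiplicative (ZMod n₂))) := by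
  rcases eq_or_ne n 0 with rfl | hn0
  · exfalso
    apply h1
    refine ⟨⟨-1, fun z => ?_⟩⟩
    rcases Int.units_eq_one_or z with h | h
    · refine ⟨2, ?_⟩
      show (-1 : (ZMod 0)ˣ) ^ (2:ℤ) = z
      rw [h]
      exact Even.neg_one_zpow even_two
    · refine ⟨1, ?_⟩
      show (-1 : (ZMod 0)ˣ) ^ (1:ℤ) = z
      rw [h, zpow_one]
      rfl
  haveI : NeZero n := ⟨hn0⟩
  obtain ⟨x, hx⟩ := h2
  have hG : Fintype.card (ZMod n)ˣ = n.totient := ZMod.card_units_eq_totient n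
  have hm0 : 0 < n.totient / 2 := hx ▸ orderOf_pos x
  have hn2 : 2 < n := by
    by_contra hc
    push_neg at hc
    interval_cases n
    · exact hn0 rfl
    · rw [Nat.totient_one] at hm0
      omega
    · rw [Nat.totient_two] at hm0
      omega
  obtain ⟨r, hr⟩ := Nat.totient_even hn2
  have hcard : Fintype.card (ZMod n)ˣ = 2 * (n.totient / 2) := by omega
  exact aux_struct (n.totient / 2) hm0 hcard h1 x hx
end

section
/- For n ≥ 3, the quotient group U(n)/{±1} is cyclic if and only if U(n) contains an element of multiplicative order φ(n)/2. -/
open Subgroup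

lemma lemB {G : Type*} [CommGroup G] [Finite G] (x : G)
    (hcard : Nat.card G = 2 * orderOf x)
    (hsq : ∀ g : G, g ^ 2 = 1 → g ∈ Subgroup.zpowers x) : IsCyclic G := by
  have hm0 : 0 < orderOf x := (isOfFinOrder_of_finite x).orderOf_pos
  set m := orderOf x with hm
  obtain ⟨y, hy⟩ : ∃ y : G, y ∉ zpowers x := by
    by_contra h
    push_neg at h
    have htop : zpowers x = ⊤ := (Subgroup.eq_top_iff' _).mpr h
    have : Nat.card (zpowers x) = Nat.card G := by rw [htop]; exact Subgroup.card_top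
    rw [Nat.card_zpowers, hcard] at this
    omega
  have hidx : Nat.card (G ⧸ zpowers x) = 2 := by
    have := Subgroup.card_eq_card_quotient_mul_card_subgroup (zpowers x)
    rw [Nat.card_zpowers, hcard] at this
    exact Nat.eq_of_mul_eq_mul_right hm0 this.symm
  have hy2 : y ^ 2 ∈ zpowers x := by
    have : ((y : G ⧸ zpowers x)) ^ 2 = 1 := by
      rw [← hidx]; exact pow_card_eq_one'
    rwa [← QuotientGroup.mk_pow, QuotientGroup.eq_one_iff] at this
  obtain ⟨j, hj⟩ := hy2
  have h1 : y ^ 2 = x ^ j := by simpa using hj.symm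
  have hpow : ∀ c : ℤ, (y * x ^ (-c)) ^ 2 = x ^ (j - 2 * c) := by
    intro c
    rw [mul_pow, h1, ← zpow_natCast (x ^ (-c)), ← zpow_mul, ← zpow_add]
    congr 1; push_cast; ring
  have hymem : ∀ c : ℤ, (y * x ^ (-c)) ∈ zpowers x → y ∈ zpowers x := by
    intro c h
    have : y = (y * x ^ (-c)) * x ^ c := by group
    rw [this]
    exact mul_mem h (zpow_mem (mem_zpowers x) c)
  rcases Int.even_or_odd j with ⟨c, hc⟩ | ⟨c, hc⟩
  · exfalso
    have hj0 : j - 2 * c = 0 := by omega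
    have hw : (y * x ^ (-c)) ^ 2 = 1 := by rw [hpow c, hj0, zpow_zero]
    exact hy (hymem c (hsq _ hw))
  · set z := y * x ^ (-c) with hzdef
    have hz2 : z ^ 2 = x := by
      rw [hpow c, show j - 2 * c = 1 by omega, zpow_one]
    have hxz : x ∈ zpowers z := ⟨2, by show z ^ (2:ℤ) = x; rw [← hz2]; norm_cast⟩
    have hle : zpowers x ≤ zpowers z := Subgroup.zpowers_le.mpr hxz
    have hznot : z ∉ zpowers x := fun h => hy (hymem c h)
    have hmd : m ∣ orderOf z := by
      rw [hm, ← hz2]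
      exact orderOf_pow_dvd 2
    have hdc : orderOf z ∣ m * 2 := by
      rw [mul_comm]; exact hcard ▸ orderOf_dvd_natCard z
    obtain ⟨t, ht⟩ := hmd
    have ht2 : t ∣ 2 := (mul_dvd_mul_iff_left hm0.ne').mp (ht ▸ hdc)
    have ht0 : 1 ≤ t := Nat.pos_of_ne_zero (by
      rintro rfl
      rw [mul_zero] at ht
      exact (orderOf_pos z).ne' ht)
    have htle : t ≤ 2 := Nat.le_of_dvd (by norm_num) ht2
    interval_cases t
    · exfalso
      have hcz : Nat.card (zpowers z) = Nat.card (zpowers x) := by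
        rw [Nat.card_zpowers, Nat.card_zpowers, ← hm, ht, mul_one]
      have : zpowers x = zpowers z := Subgroup.eq_of_le_of_card_ge hle hcz.le
      exact hznot (this ▸ mem_zpowers z)
    · exact isCyclic_of_orderOf_eq_card z (by rw [ht, hcard, mul_comm])

open Subgroup

-- helper: Units.map of a ring hom sends -1 to -1
lemma map_units_neg_one {R S : Type*} [Ring R] [Ring S] (f : R →+* S) :
    Units.map (f : R →* S) (-1 : Rˣ) = -1 := by
  ext
  simp

-- helper: order of a square root of -1 in (ZMod a)ˣ is 4, so 4 divides the exponent
lemma four_dvd_exponent {a : ℕ} (ha : 3 ≤ a) (s : (ZMod a)ˣ) (hs : s ^ 2 = -1) :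
    4 ∣ Monoid.exponent (ZMod a)ˣ := by
  haveI : NeZero a := ⟨by omega⟩
  haveI : Fact (2 < a) := ⟨by omega⟩
  have hne : ((-1 : (ZMod a)ˣ) : ZMod a) ≠ ((1 : (ZMod a)ˣ) : ZMod a) := by
    simpa using ZMod.neg_one_ne_one (n := a)
  have hs2 : s ^ 2 ≠ 1 := by
    rw [hs]; exact fun h => hne (congrArg Units.val h)
  have h4 : s ^ 4 = 1 := by
    have : s ^ 4 = (s ^ 2) ^ 2 := by rw [← pow_mul]
    rw [this, hs]
    ext; simp
  have hd : orderOf s ∣ 4 := orderOf_dvd_of_pow_eq_one h4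
  have hnd : ¬ orderOf s ∣ 2 := fun h => hs2 (orderOf_dvd_iff_pow_eq_one.mp h)
  have ho : orderOf s = 4 := by
    have hle : orderOf s ≤ 4 := Nat.le_of_dvd (by norm_num) hd
    interval_cases h : orderOf s <;> omega
  exact ho ▸ Monoid.order_dvd_exponent s

lemma lemA (a b : ℕ) (ha : 3 ≤ a) (hb : 3 ≤ b) (hab : Nat.Coprime a b)
    (s x : (ZMod (a * b))ˣ) (hs : s ^ 2 = -1)
    (hx : 2 * orderOf x = Nat.totient (a * b)) : False := by
  haveI : NeZero a := ⟨by omega⟩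
  haveI : NeZero b := ⟨by omega⟩
  haveI : NeZero (a * b) := ⟨by positivity⟩
  have hdvda : a ∣ a * b := ⟨b, rfl⟩
  have hdvdb : b ∣ a * b := ⟨a, mul_comm a b⟩
  set πa : (ZMod (a * b))ˣ →* (ZMod a)ˣ :=
    Units.map ((ZMod.castHom hdvda (ZMod a)) : ZMod (a * b) →* ZMod a) with hπa
  set πb : (ZMod (a * b))ˣ →* (ZMod b)ˣ :=
    Units.map ((ZMod.castHom hdvdb (ZMod b)) : ZMod (a * b) →* ZMod b) with hπb
  -- 4 divides both exponents
  have h4a : 4 ∣ Monoid.exponent (ZMod a)ˣ := by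
    refine four_dvd_exponent ha (πa s) ?_
    rw [← map_pow, hs, hπa]
    exact map_units_neg_one _
  have h4b : 4 ∣ Monoid.exponent (ZMod b)ˣ := by
    refine four_dvd_exponent hb (πb s) ?_
    rw [← map_pow, hs, hπb]
    exact map_units_neg_one _
  set Ea := Monoid.exponent (ZMod a)ˣ
  set Eb := Monoid.exponent (ZMod b)ˣ
  set L := Nat.lcm Ea Eb with hL
  have hEa0 : Ea ≠ 0 := Monoid.exponent_ne_zero_of_finite
  have hEb0 : Eb ≠ 0 := Monoid.exponent_ne_zero_of_finite
  have hL0 : 0 < L := Nat.pos_of_ne_zero (Nat.lcm_ne_zero hEa0 hEb0)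
  -- x ^ L = 1
  have hxa : (πa x) ^ L = 1 :=
    orderOf_dvd_iff_pow_eq_one.mp
      ((Monoid.order_dvd_exponent (πa x)).trans (Nat.dvd_lcm_left _ _))
  have hxb : (πb x) ^ L = 1 :=
    orderOf_dvd_iff_pow_eq_one.mp
      ((Monoid.order_dvd_exponent (πb x)).trans (Nat.dvd_lcm_right _ _))
  set A : ℤ := (((x : ZMod (a * b)).val : ℤ)) with hA
  have hAx : ((A : ZMod (a * b))) = (x : ZMod (a * b)) := by
    rw [hA]
    push_cast
    rw [ZMod.natCast_val, ZMod.cast_id]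
  have key : ∀ (c : ℕ) (h : c ∣ a * b), (Units.map ((ZMod.castHom h (ZMod c)) :
      ZMod (a * b) →* ZMod c) x) ^ L = 1 → (c : ℤ) ∣ A ^ L - 1 := by
    intro c h hc
    have h1 : (ZMod.castHom h (ZMod c)) ((x : ZMod (a * b))) ^ L = 1 := by
      have hval := congrArg Units.val hc
      simpa [Units.coe_map] using hval
    rw [← hAx, map_intCast] at h1
    have : ((A ^ L - 1 : ℤ) : ZMod c) = 0 := by
      push_cast
      rw [h1]
      ring
    exact (ZMod.intCast_zmod_eq_zero_iff_dvd _ _).mp this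
  have hda : (a : ℤ) ∣ A ^ L - 1 := key a hdvda hxa
  have hdb : (b : ℤ) ∣ A ^ L - 1 := key b hdvdb hxb
  have hdab : ((a * b : ℕ) : ℤ) ∣ A ^ L - 1 := by
    push_cast
    exact (Nat.isCoprime_iff_coprime.mpr hab).mul_dvd hda hdb
  have hxL : x ^ L = 1 := by
    have : ((A ^ L : ℤ) : ZMod (a * b)) = 1 := by
      have := (ZMod.intCast_zmod_eq_zero_iff_dvd (A ^ L - 1) (a * b)).mpr hdab
      push_cast at this ⊢
      linear_combination this
    ext
    push_cast at this ⊢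
    rw [hAx] at this
    rw [this]
  have hmL : orderOf x ∣ L := orderOf_dvd_iff_pow_eq_one.mpr hxL
  -- arithmetic contradiction
  have hcard : Ea * Eb ∣ Nat.totient a * Nat.totient b := by
    refine Nat.mul_dvd_mul ?_ ?_
    · have := Group.exponent_dvd_card (G := (ZMod a)ˣ)
      rwa [ZMod.card_units_eq_totient] at this
    · have := Group.exponent_dvd_card (G := (ZMod b)ˣ)
      rwa [ZMod.card_units_eq_totient] at this
  have htot : Nat.totient a * Nat.totient b = Nat.totient (a * b) := (Nat.totient_mul hab).symm
  have hgl : Nat.gcd Ea Eb * L = Ea * Eb := Nat.gcd_mul_lcm Ea Eb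
  have hchain : Nat.gcd Ea Eb * L ∣ 2 * L := by
    rw [hgl]
    calc Ea * Eb ∣ Nat.totient a * Nat.totient b := hcard
    _ = 2 * orderOf x := by rw [htot, ← hx]
    _ ∣ 2 * L := mul_dvd_mul_left 2 hmL
  have hg2 : Nat.gcd Ea Eb ∣ 2 := (Nat.mul_dvd_mul_iff_right hL0).mp hchain
  have h4g : 4 ∣ Nat.gcd Ea Eb := Nat.dvd_gcd h4a h4b
  have := Nat.le_of_dvd (by norm_num) (h4g.trans hg2)
  omega

lemma lemShape (n : ℕ) (hn : 3 ≤ n) (h4 : ¬ (4 ∣ n))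
    (hns : ¬ ∃ a b : ℕ, 3 ≤ a ∧ 3 ≤ b ∧ Nat.Coprime a b ∧ a * b = n) :
    ∃ p k b : ℕ, p.Prime ∧ p ≠ 2 ∧ (b = 1 ∨ b = 2) ∧ n = p ^ k * b := by
  have hn0 : n ≠ 0 := by omega
  set v := n.factorization 2 with hv
  have hv1 : v ≤ 1 := by
    by_contra h
    exact h4 (dvd_trans (by rw [show (4:ℕ) = 2^2 by norm_num]; exact pow_dvd_pow 2 (by omega))
      (Nat.ordProj_dvd n 2))
  set q := n / 2 ^ v with hq
  have hnq : 2 ^ v * q = n := Nat.ordProj_mul_ordCompl_eq_self n 2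
  have hqodd : ¬ 2 ∣ q := Nat.not_dvd_ordCompl Nat.prime_two hn0
  have hq1 : q ≠ 1 := by
    rintro h
    rw [h, mul_one] at hnq
    interval_cases v <;> omega
  have hq0 : q ≠ 0 := by intro h; rw [h, mul_zero] at hnq; omega
  set p := q.minFac with hp
  have hpp : p.Prime := Nat.minFac_prime hq1
  have hpq : p ∣ q := Nat.minFac_dvd q
  have hp2 : p ≠ 2 := by intro h; exact hqodd (h ▸ hpq)
  have hpn : p ∣ n := hpq.trans ⟨2 ^ v, by rw [← hnq]; ring⟩
  set k := n.factorization p with hk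
  set a := p ^ k with hadef
  have hak : a ∣ n := Nat.ordProj_dvd n p
  set b := n / a with hbdef
  have hab : a * b = n := Nat.mul_div_cancel' hak
  have hcop : Nat.Coprime a b := Nat.Coprime.pow_left k (Nat.coprime_ordCompl hpp hn0)
  have ha3 : 3 ≤ a := by
    have hk1 : 1 ≤ k := hpp.factorization_pos_of_dvd hn0 hpn
    have : p ≤ p ^ k := Nat.le_self_pow (by omega) p
    have hp3 : 3 ≤ p := by
      rcases hpp.two_le.lt_or_eq with h | h
      · omega
      · omega
    omega
  have hb2 : b ≤ 2 := by
    by_contra h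
    exact hns ⟨a, b, ha3, by omega, hcop, hab⟩
  have hb0 : b ≠ 0 := by intro h; rw [h, mul_zero] at hab; omega
  clear_value v q p k a b
  refine ⟨p, k, b, hpp, hp2, by omega, by rw [← hadef]; exact hab.symm⟩

lemma lemC (p k b n : ℕ) (hp : p.Prime) (hp2 : p ≠ 2) (hb : b = 1 ∨ b = 2)
    (hnb : n = p ^ k * b) (hn : 3 ≤ n) (g : (ZMod n)ˣ) (hg : g ^ 2 = 1) :
    g = 1 ∨ g = -1 := by
  haveI : NeZero n := ⟨by omega⟩
  set A : ℤ := ((g : ZMod n).val : ℤ) with hA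
  have hAx : ((A : ZMod n)) = (g : ZMod n) := by
    rw [hA]; push_cast; rw [ZMod.natCast_val, ZMod.cast_id]
  -- n ∣ (A - 1) * (A + 1)
  have hprod : (n : ℤ) ∣ (A - 1) * (A + 1) := by
    rw [← ZMod.intCast_zmod_eq_zero_iff_dvd]
    push_cast
    rw [hAx]
    have : (g : ZMod n) ^ 2 = 1 := by
      have := congrArg Units.val hg
      push_cast at this
      exact this
    linear_combination this
  have hpk : ((p : ℤ)) ^ k ∣ (A - 1) * (A + 1) := by
    refine dvd_trans ?_ hprod
    exact_mod_cast Int.natCast_dvd_natCast.mpr ⟨b, hnb⟩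
  have hpZ : Prime (p : ℤ) := Int.prime_iff_natAbs_prime.mpr (by simpa using hp)
  -- p does not divide both A - 1 and A + 1
  have hnotboth : ¬ ((p : ℤ) ∣ A - 1 ∧ (p : ℤ) ∣ A + 1) := by
    rintro ⟨h1, h2⟩
    have : (p : ℤ) ∣ 2 := by
      have := dvd_sub h2 h1
      simpa using this
    have hple : p ∣ 2 := by exact_mod_cast this
    have := Nat.le_of_dvd (by norm_num) hple
    have := hp.two_le
    omega
  -- 2 ∣ A - 1 and A + 1 when b = 2
  have h2dvd : b = 2 → ((2 : ℤ) ∣ A - 1 ∧ (2 : ℤ) ∣ A + 1) := by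
    intro hb2
    have hcop := ZMod.val_coe_unit_coprime g
    have hn2 : 2 ∣ n := ⟨p ^ k, by rw [hnb, hb2]; ring⟩
    have hodd : ¬ (2 ∣ (g : ZMod n).val) := by
      intro h
      have : 2 ∣ Nat.gcd ((g : ZMod n).val) n := Nat.dvd_gcd h hn2
      rw [hcop] at this
      omega
    have : ¬ ((2:ℤ) ∣ A) := by
      rw [hA]
      exact_mod_cast fun h => hodd (Int.ofNat_dvd.mp (by exact_mod_cast h))
    constructor <;> omega
  have h2cop : IsCoprime (2 : ℤ) ((p : ℤ) ^ k) := by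
    refine IsCoprime.pow_right ?_
    rw [Int.prime_two.coprime_iff_not_dvd]
    intro h
    have : (2 : ℕ) ∣ p := by exact_mod_cast h
    have := (Nat.prime_dvd_prime_iff_eq Nat.prime_two hp).mp this
    exact hp2 this.symm
  -- main case split
  have hmain : (n : ℤ) ∣ A - 1 ∨ (n : ℤ) ∣ A + 1 := by
    have hcase : ¬ (p : ℤ) ∣ A + 1 ∨ ¬ (p : ℤ) ∣ A - 1 := by
      by_contra h
      push_neg at h
      exact hnotboth ⟨h.2, h.1⟩
    have hnZ : (n : ℤ) = (p : ℤ) ^ k * (b : ℤ) := by exact_mod_cast hnb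
    rcases hcase with h | h
    · -- p^k ∣ A - 1
      left
      have hcop' : IsCoprime ((p : ℤ) ^ k) (A + 1) :=
        IsCoprime.pow_left ((hpZ.coprime_iff_not_dvd).mpr h)
      have hpk1 : (p : ℤ) ^ k ∣ A - 1 := hcop'.dvd_of_dvd_mul_right hpk
      rcases hb with hb1 | hb2
      · rw [hnZ, hb1]; simpa using hpk1
      · rw [hnZ, hb2]
        rw [mul_comm]
        exact IsCoprime.mul_dvd h2cop ((h2dvd hb2).1) hpk1
    · -- p^k ∣ A + 1
      right
      have hcop' : IsCoprime ((p : ℤ) ^ k) (A - 1) :=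
        IsCoprime.pow_left ((hpZ.coprime_iff_not_dvd).mpr h)
      have hpk1 : (p : ℤ) ^ k ∣ A + 1 := hcop'.dvd_of_dvd_mul_left hpk
      rcases hb with hb1 | hb2
      · rw [hnZ, hb1]; simpa using hpk1
      · rw [hnZ, hb2]
        rw [mul_comm]
        exact IsCoprime.mul_dvd h2cop ((h2dvd hb2).2) hpk1
  rcases hmain with h | h
  · left
    ext
    have : ((A - 1 : ℤ) : ZMod n) = 0 := (ZMod.intCast_zmod_eq_zero_iff_dvd _ _).mpr h
    push_cast at this
    rw [hAx] at this
    push_cast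
    linear_combination this
  · right
    ext
    have : ((A + 1 : ℤ) : ZMod n) = 0 := (ZMod.intCast_zmod_eq_zero_iff_dvd _ _).mpr h
    push_cast at this
    rw [hAx] at this
    push_cast
    linear_combination this

/-- For n ≥ 3, U(n)/{±1} is cyclic iff U(n) has an element of order φ(n)/2. -/
theorem stmt_11 (n : ℕ) (hn : 3 ≤ n) :
    IsCyclic ((ZMod n)ˣ ⧸ Subgroup.zpowers (-1 : (ZMod n)ˣ)) ↔
      ∃ x : (ZMod n)ˣ, orderOf x = Nat.totient n / 2 := by
  haveI : NeZero n := ⟨by omega⟩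
  haveI : Fact (2 < n) := ⟨by omega⟩
  haveI : Fact (Nat.Prime 2) := ⟨Nat.prime_two⟩
  set m := Nat.totient n / 2 with hmdef
  have hm : 2 * m = Nat.totient n := by
    obtain ⟨w, hw⟩ := Nat.totient_even (show 2 < n by omega)
    rw [hmdef, hw]
    omega
  have hm0 : 0 < m := by
    have := Nat.totient_pos.mpr (show 0 < n by omega)
    omega
  have hG : Nat.card (ZMod n)ˣ = Nat.totient n := by
    rw [Nat.card_eq_fintype_card, ZMod.card_units_eq_totient]
  have hneg_ne_one : (-1 : (ZMod n)ˣ) ≠ 1 := by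
    intro hh
    have : ((-1 : (ZMod n)ˣ) : ZMod n) = 1 := by rw [hh]; simp
    exact ZMod.neg_one_ne_one (by simpa using this)
  have hord2 : orderOf (-1 : (ZMod n)ˣ) = 2 := orderOf_eq_prime neg_one_sq hneg_ne_one
  have hNcard : Nat.card (Subgroup.zpowers (-1 : (ZMod n)ˣ)) = 2 := by
    rw [Nat.card_zpowers, hord2]
  have hQcard : Nat.card ((ZMod n)ˣ ⧸ Subgroup.zpowers (-1 : (ZMod n)ˣ)) = m := by
    have hfull := Subgroup.card_eq_card_quotient_mul_card_subgroup
      (Subgroup.zpowers (-1 : (ZMod n)ˣ))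
    rw [hG, hNcard] at hfull
    omega
  constructor
  · -- forward: quotient cyclic → element of order m
    intro hQ
    obtain ⟨g, hgen⟩ := hQ.exists_generator
    have hordg : orderOf g = m := by
      rw [← Nat.card_zpowers, (Subgroup.eq_top_iff' _).mpr hgen, Subgroup.card_top, hQcard]
    obtain ⟨x₀, rfl⟩ := QuotientGroup.mk'_surjective (Subgroup.zpowers (-1 : (ZMod n)ˣ)) g
    have hdvd : m ∣ orderOf x₀ := by
      rw [← hordg]
      exact orderOf_map_dvd _ x₀
    obtain ⟨t, htm⟩ := hdvd
    have ht0 : t ≠ 0 := by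
      intro h
      rw [h, mul_zero] at htm
      exact (orderOf_pos x₀).ne' htm
    refine ⟨x₀ ^ t, ?_⟩
    rw [orderOf_pow, htm, Nat.gcd_eq_right (dvd_mul_left t m), Nat.mul_div_cancel _ (Nat.pos_of_ne_zero ht0)]
  · -- backward
    rintro ⟨x, hx⟩
    by_cases hmem : (-1 : (ZMod n)ˣ) ∈ Subgroup.zpowers x
    swap
    · -- -1 ∉ ⟨x⟩ : image of x has order m
      set x' : (ZMod n)ˣ ⧸ Subgroup.zpowers (-1 : (ZMod n)ˣ) := QuotientGroup.mk x with hx'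
      refine isCyclic_of_orderOf_eq_card x' ?_
      rw [hQcard]
      have hdvd : orderOf x' ∣ m := by
        rw [← hx]
        exact orderOf_map_dvd (QuotientGroup.mk' _) x
      have hdvd2 : m ∣ orderOf x' := by
        have h1 : x ^ orderOf x' ∈ Subgroup.zpowers (-1 : (ZMod n)ˣ) := by
          have h0 := pow_orderOf_eq_one x'
          rw [hx', ← QuotientGroup.mk_pow] at h0
          exact (QuotientGroup.eq_one_iff _).mp h0
        obtain ⟨j, hj⟩ := h1
        have hj' : (-1 : (ZMod n)ˣ) ^ j = x ^ orderOf x' := hj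
        have hz : ((-1 : (ZMod n)ˣ)) ^ (2:ℤ) = 1 := by
          rw [zpow_two]
          simp
        rcases Int.even_or_odd j with ⟨c, hc⟩ | ⟨c, hc⟩
        · -- x ^ r = 1
          have : x ^ orderOf x' = 1 := by
            rw [← hj', hc, show c + c = 2 * c by ring, zpow_mul, hz, one_zpow]
          rw [← hx]
          exact orderOf_dvd_of_pow_eq_one this
        · -- x ^ r = -1 : contradiction with hmem
          exfalso
          apply hmem
          have hval : x ^ orderOf x' = -1 := by
            rw [← hj', hc, zpow_add, zpow_mul, hz, one_zpow, zpow_one, one_mul]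
          exact ⟨(orderOf x' : ℤ), by
            show x ^ ((orderOf x' : ℤ)) = -1
            rw [zpow_natCast, hval]⟩
      exact Nat.dvd_antisymm hdvd hdvd2
    · -- -1 ∈ ⟨x⟩ : get x ^ (m/2) = -1
      have hx' : orderOf x = m := hx
      -- find k : ℕ with x ^ k = -1
      obtain ⟨k, hk⟩ : ∃ k : ℕ, x ^ k = -1 := by
        obtain ⟨j, hj⟩ := hmem
        have hj' : x ^ j = -1 := hj
        refine ⟨(j % (orderOf x : ℤ)).toNat, ?_⟩
        rw [← zpow_natCast, Int.toNat_of_nonneg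
          (Int.emod_nonneg j (by simp [hx', hm0.ne'])), zpow_mod_orderOf, hj']
      have hnk : ¬ (m ∣ k) := by
        intro hd
        rw [← hx'] at hd
        rw [orderOf_dvd_iff_pow_eq_one.mp hd] at hk
        exact hneg_ne_one hk.symm
      have h2k : x ^ (k * 2) = 1 := by
        rw [pow_mul, hk, neg_one_sq]
      have hm2k : m ∣ k * 2 := by
        rw [← hx']
        exact orderOf_dvd_of_pow_eq_one h2k
      have hmeven : 2 ∣ m := by
        by_contra hodd
        have hcop : Nat.Coprime m 2 := Nat.coprime_two_right.mpr (Nat.odd_iff.mpr (by omega))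
        exact hnk (hcop.dvd_of_dvd_mul_right hm2k)
      obtain ⟨h, hh⟩ := hmeven
      have hhk : h ∣ k := by
        have : 2 * h ∣ 2 * k := by rw [← hh]; rwa [mul_comm k 2] at hm2k
        exact (mul_dvd_mul_iff_left (two_ne_zero)).mp this
      obtain ⟨t, htk⟩ := hhk
      have htodd : ¬ (2 ∣ t) := by
        rintro ⟨u, hu⟩
        exact hnk ⟨u, by rw [htk, hu, hh]; ring⟩
      have hh0 : 0 < h := by omega
      have hdvdhm : h ∣ m := ⟨2, by omega⟩
      have hxh2 : orderOf (x ^ h) = 2 := by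
        rw [orderOf_pow, hx', Nat.gcd_eq_right hdvdhm, hh, Nat.mul_div_cancel _ hh0]
      have hxh : x ^ h = -1 := by
        have ht1 : t % 2 = 1 := by omega
        have e : (x ^ h) ^ (t % orderOf (x ^ h)) = (x ^ h) ^ t := by rw [pow_mod_orderOf]
        rw [hxh2, ht1, pow_one] at e
        calc x ^ h = (x ^ h) ^ t := e
        _ = x ^ k := by rw [← pow_mul, ← htk]
        _ = -1 := hk
      -- case on parity of h
      by_cases hhodd : 2 ∣ h
      · -- h even: s := x ^ (h/2) has s^2 = -1
        obtain ⟨h2, hh2⟩ := hhodd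
        set s : (ZMod n)ˣ := x ^ h2 with hsdef
        have hs : s ^ 2 = -1 := by
          rw [hsdef, ← pow_mul, show h2 * 2 = h by omega, hxh]
        have h4n : ¬ (4 ∣ n) := by
          intro hd4
          have hall : ∀ u : (ZMod 4)ˣ, u ^ 2 ≠ -1 := by decide
          refine hall (Units.map ((ZMod.castHom hd4 (ZMod 4)) : ZMod n →* ZMod 4) s) ?_
          rw [← map_pow, hs]
          exact map_units_neg_one _
        by_cases hsplit : ∃ a b : ℕ, 3 ≤ a ∧ 3 ≤ b ∧ Nat.Coprime a b ∧ a * b = n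
        · obtain ⟨a, b, ha, hb, hcop, hab⟩ := hsplit
          subst hab
          exact absurd (lemA a b ha hb hcop s x hs (by rw [hx', hm])) (by simp)
        · obtain ⟨p, kk, bb, hpp, hp2, hbb, hnpb⟩ := lemShape n hn h4n hsplit
          have hsqall : ∀ g : (ZMod n)ˣ, g ^ 2 = 1 → g ∈ Subgroup.zpowers x := by
            intro g hg
            rcases lemC p kk bb n hpp hp2 hbb hnpb hn g hg with h1 | h1
            · rw [h1]; exact one_mem _
            · rw [h1]; exact hmem
          haveI hcyc : IsCyclic (ZMod n)ˣ := lemB x (by rw [hG, ← hm, hx']) hsqall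
          exact isCyclic_of_surjective (QuotientGroup.mk'
            (Subgroup.zpowers (-1 : (ZMod n)ˣ))) (QuotientGroup.mk'_surjective _)
      · -- h odd: Cauchy in the quotient
        set Q := (ZMod n)ˣ ⧸ Subgroup.zpowers (-1 : (ZMod n)ˣ) with hQdef
        set x' : Q := QuotientGroup.mk x with hxq
        have hordx' : orderOf x' = h := by
          apply Nat.dvd_antisymm
          · apply orderOf_dvd_of_pow_eq_one
            rw [hxq, ← QuotientGroup.mk_pow, hxh, QuotientGroup.eq_one_iff]
            exact Subgroup.mem_zpowers _
          · have h1 : x ^ orderOf x' ∈ Subgroup.zpowers (-1 : (ZMod n)ˣ) := by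
              have h0 := pow_orderOf_eq_one x'
              rw [hxq, ← QuotientGroup.mk_pow] at h0
              exact (QuotientGroup.eq_one_iff _).mp h0
            have h2 : orderOf (x ^ orderOf x') ∣ 2 := by
              rw [← hNcard]
              exact Subgroup.orderOf_dvd_natCard _ h1
            have h3 : x ^ (orderOf x' * 2) = 1 := by
              rw [pow_mul]
              exact orderOf_dvd_iff_pow_eq_one.mp h2
            have h4 : m ∣ orderOf x' * 2 := by
              rw [← hx']
              exact orderOf_dvd_of_pow_eq_one h3
            rw [hh] at h4
            exact (mul_dvd_mul_iff_right (two_ne_zero)).mp (by rwa [mul_comm 2 h] at h4)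
        obtain ⟨y, hy2⟩ := exists_prime_orderOf_dvd_card' (G := Q) 2
          (by rw [hQcard, hh]; exact ⟨h, rfl⟩)
        have hcop : Nat.Coprime (orderOf x') (orderOf y) := by
          rw [hordx', hy2]
          exact Nat.coprime_two_right.mpr (Nat.odd_iff.mpr (by omega))
        have hordmul : orderOf (x' * y) = h * 2 := by
          rw [← hordx', ← hy2]
          exact (Commute.all x' y).orderOf_mul_eq_mul_orderOf_of_coprime hcop
        exact isCyclic_of_orderOf_eq_card (x' * y) (by rw [hordmul, hQcard, hh, mul_comm])
end

section
/- Let p be a safe prime (p and (p-1)/2 both prime), and suppose the integer N coprime to p is divisible by at least (p-1)/2 primes q₁, ..., q_k all lying in the same class [i] ≠ [1] of U(p)/{±1}. Then N can be written as N = a₁·a₂···a_r with r ≥ 2, each a_j a nonunit integer, and all classes [a_j] equal in U(p)/{±1} (i.e., all a_j pairwise congruent to ±each other mod p). -/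
open Finset

private lemma pm_mul {α : Type*} [CommRing α] {x x' y y' : α}
    (h1 : x = y ∨ x = -y) (h2 : x' = y' ∨ x' = -y') :
    x * x' = y * y' ∨ x * x' = -(y * y') := by
  rcases h1 with rfl | rfl <;> rcases h2 with rfl | rfl
  · left; ring
  · right; ring
  · right; ring
  · left; ring

private lemma pm_congr {α : Type*} [CommRing α] {x y z : α}
    (h1 : x = y ∨ x = -y) (h2 : y = z ∨ y = -z) :
    x = z ∨ x = -z := by
  rcases h1 with rfl | rfl <;> rcases h2 with rfl | rfl <;> simp

private lemma prod_pm {α : Type*} [CommRing α] (g : α) (I : Finset ℕ) (f : ℕ → α)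
    (h : ∀ i ∈ I, f i = g ∨ f i = -g) :
    (∏ i ∈ I, f i) = g ^ I.card ∨ (∏ i ∈ I, f i) = -g ^ I.card := by
  induction I using Finset.induction with
  | empty => simp
  | @insert x I hx ih =>
      rw [prod_insert hx, card_insert_of_notMem hx]
      have h1 := h x (mem_insert_self x I)
      have h2 := ih (fun i hi => h i (mem_insert_of_mem hi))
      rcases h1 with h1 | h1 <;> rcases h2 with h2 | h2 <;> rw [h1, h2]
      · left; ring
      · right; ring
      · right; ring
      · left; ring

private def pmPows {α : Type*} [CommRing α] (u : αˣ) : Subgroup αˣ where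
  carrier := {x | ∃ t : ℤ, x = u ^ t ∨ x = -u ^ t}
  one_mem' := ⟨0, Or.inl (by simp)⟩
  mul_mem' := by
    rintro x y ⟨a, ha⟩ ⟨b, hb⟩
    refine ⟨a + b, ?_⟩
    rcases ha with rfl | rfl <;> rcases hb with rfl | rfl <;>
      simp [zpow_add, neg_mul, mul_neg, neg_neg]
  inv_mem' := by
    rintro x ⟨a, ha⟩
    refine ⟨-a, ?_⟩
    rcases ha with rfl | rfl <;> simp [zpow_neg, inv_neg]

private lemma exists_pm {p m : ℕ} [Fact (Nat.Prime p)] (hp2 : 2 < p) (hm : m.Prime)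
    (hcard : Fintype.card (ZMod p)ˣ = 2 * m)
    (u : (ZMod p)ˣ) (hu2 : u ^ 2 ≠ 1) (x : (ZMod p)ˣ) :
    ∃ t : ℤ, x = u ^ t ∨ x = -u ^ t := by
  haveI : Fact (2 < p) := ⟨hp2⟩
  have hne : (-1 : (ZMod p)ˣ) ≠ 1 := by
    intro h
    have : (-1 : ZMod p) = 1 := by
      simpa using congrArg Units.val h
    exact ZMod.neg_one_ne_one this
  have h1 : orderOf u ∣ 2 * m := hcard ▸ orderOf_dvd_card
  have h2 : ¬ orderOf u ∣ 2 := fun h => hu2 (orderOf_dvd_iff_pow_eq_one.mp h)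
  have hmd : m ∣ orderOf u := by
    by_contra hmd
    exact h2 (Nat.Coprime.dvd_of_dvd_mul_right
      ((hm.coprime_iff_not_dvd.mpr hmd).symm) h1)
  set K := Subgroup.closure ({u, -1} : Set (ZMod p)ˣ) with hK
  have huK : u ∈ K := Subgroup.subset_closure (by simp)
  have hnK : (-1 : (ZMod p)ˣ) ∈ K := Subgroup.subset_closure (by simp)
  have h2K : 2 ∣ Nat.card K := by
    have ho : orderOf (-1 : (ZMod p)ˣ) = 2 := by
      refine orderOf_eq_prime (by simp) hne
    exact ho ▸ Subgroup.orderOf_dvd_natCard K hnK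
  have hdK : orderOf u ∣ Nat.card K := Subgroup.orderOf_dvd_natCard K huK
  have hmK : m ∣ Nat.card K := hmd.trans hdK
  have h2mK : 2 * m ∣ Nat.card K := by
    rcases eq_or_ne m 2 with rfl | hm2
    · -- orderOf u ∣ 4, not ∣ 2, so orderOf u = 4
      have h4 : orderOf u = 4 := by
        have hle : orderOf u ≤ 4 := Nat.le_of_dvd (by norm_num) h1
        interval_cases h : orderOf u <;> revert h1 h2 <;> norm_num
      rw [h4] at hdK
      omega
    · have hcop : Nat.Coprime 2 m := (Nat.coprime_primes Nat.prime_two hm).mpr (fun h => hm2 h.symm)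
      exact Nat.Coprime.mul_dvd_of_dvd_of_dvd hcop h2K hmK
  have hKdvd : Nat.card K ∣ 2 * m := by
    have := Subgroup.card_subgroup_dvd_card K
    rwa [Nat.card_eq_fintype_card (α := (ZMod p)ˣ), hcard] at this
  have hKtop : K = ⊤ := by
    apply Subgroup.eq_top_of_card_eq
    rw [Nat.card_eq_fintype_card (α := (ZMod p)ˣ), hcard]
    exact Nat.dvd_antisymm hKdvd h2mK
  have hle : K ≤ pmPows u := by
    rw [hK]
    apply (Subgroup.closure_le _).mpr
    rintro y (rfl | rfl)
    · exact ⟨1, Or.inl (by simp)⟩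
    · exact ⟨0, Or.inr (by simp)⟩
  obtain ⟨t, ht⟩ := hle (hKtop ▸ Subgroup.mem_top x)
  exact ⟨t, ht⟩

/-- Let p be a safe prime and N an integer coprime to p divisible by at least
(p-1)/2 primes q₁, ..., q_k all lying in the same class [i] ≠ [1] of
U(p)/{±1}. Then N has a nontrivial factorization N = a₁ ⋯ a_r (r ≥ 2, each
a_j a nonunit) with all factors pairwise congruent to ± each other mod p. -/
theorem stmt_15 (p : ℕ) (hp : Nat.Prime p) (hsafe : Nat.Prime ((p - 1) / 2))
    (N : ℤ) (hN : IsCoprime N (p : ℤ)) (hN1 : 1 < |N|)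
    (k : ℕ) (hk : (p - 1) / 2 ≤ k) (q : Fin k → ℕ)
    (hq : ∀ j, Nat.Prime (q j))
    (hdvd : (∏ j, (q j : ℤ)) ∣ N)
    (hsame : ∀ i j, (q i : ℤ) ≡ (q j : ℤ) [ZMOD (p : ℤ)] ∨
      (q i : ℤ) ≡ -(q j : ℤ) [ZMOD (p : ℤ)])
    (hne1 : ∀ j, ¬((q j : ℤ) ≡ 1 [ZMOD (p : ℤ)] ∨ (q j : ℤ) ≡ -1 [ZMOD (p : ℤ)])) :
    ∃ r : ℕ, 2 ≤ r ∧ ∃ a : Fin r → ℤ, N = ∏ j, a j ∧ (∀ j, 1 < |a j|) ∧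
      ∀ i j, a i ≡ a j [ZMOD (p : ℤ)] ∨ a i ≡ -(a j) [ZMOD (p : ℤ)] := by
  set m := (p - 1) / 2 with hmdef
  have hm : Nat.Prime m := hsafe
  have hp2 : 2 < p := by
    by_contra h
    push_neg at h
    interval_cases p <;> revert hp hm <;> simp [hmdef] <;> norm_num
  haveI : Fact p.Prime := ⟨hp⟩
  haveI : Fact (2 < p) := ⟨hp2⟩
  have h2m : 2 * m = p - 1 := by
    have hev : Even (p - 1) := Nat.Odd.sub_odd (hp.odd_of_ne_two (by omega)) odd_one
    exact Nat.mul_div_cancel' hev.two_dvd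
  have hcard : Fintype.card (ZMod p)ˣ = 2 * m := by
    rw [ZMod.card_units_eq_totient, Nat.totient_prime hp, h2m]
  have hm2 : 2 ≤ m := hm.two_le
  have hk2 : 2 ≤ k := le_trans hm2 hk
  haveI : NeZero k := ⟨by omega⟩
  have hNz : N ≠ 0 := by intro h; rw [h] at hN1; simp at hN1
  have hvmod : ∀ z : ℤ, z ∣ N → ((z : ZMod p)) ≠ 0 := by
    intro z hz h0
    rw [ZMod.intCast_zmod_eq_zero_iff_dvd] at h0
    have hdN : (p : ℤ) ∣ N := h0.trans hz
    have hu := hN.isUnit_of_dvd' hdN dvd_rfl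
    rw [Int.isUnit_iff] at hu
    omega
  have hsame' : ∀ i j : Fin k, (q i : ZMod p) = (q j : ZMod p) ∨
      (q i : ZMod p) = -(q j : ZMod p) := by
    intro i j
    rcases hsame i j with h | h
    · left
      have := (ZMod.intCast_eq_intCast_iff _ _ _).mpr h
      push_cast at this
      exact this
    · right
      have := (ZMod.intCast_eq_intCast_iff _ _ _).mpr h
      push_cast at this
      exact this
  have hqdvd : ∀ j, ((q j : ℤ)) ∣ N := fun j =>
    (Finset.dvd_prod_of_mem _ (mem_univ j)).trans hdvd
  have hg0 : (q 0 : ZMod p) ≠ 0 := by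
    have := hvmod _ (hqdvd 0)
    push_cast at this
    exact this
  have hne1' : (q 0 : ZMod p) ≠ 1 ∧ (q 0 : ZMod p) ≠ -1 := by
    constructor <;> intro h <;> apply hne1 0
    · left
      rw [← ZMod.intCast_eq_intCast_iff]
      push_cast
      exact h
    · right
      rw [← ZMod.intCast_eq_intCast_iff]
      push_cast
      exact h
  have hgu : IsUnit (q 0 : ZMod p) := isUnit_iff_ne_zero.mpr hg0
  set u : (ZMod p)ˣ := hgu.unit with hudef
  have hug : (u : ZMod p) = (q 0 : ZMod p) := hgu.unit_spec
  have hu2 : u ^ 2 ≠ 1 := by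
    intro h
    have h2 : ((q 0 : ZMod p)) * (q 0 : ZMod p) = 1 := by
      have hv := congrArg Units.val h
      rw [Units.val_pow_eq_pow_val, hug, Units.val_one, pow_two] at hv
      exact hv
    rcases mul_self_eq_one_iff.mp h2 with h3 | h3
    · exact hne1'.1 h3
    · exact hne1'.2 h3
  have hgm : (q 0 : ZMod p) ^ m = 1 ∨ (q 0 : ZMod p) ^ m = -1 := by
    have h1 : u ^ (2 * m) = 1 := hcard ▸ pow_card_eq_one
    have h2 : ((q 0 : ZMod p) ^ m) * ((q 0 : ZMod p) ^ m) = 1 := by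
      have hv := congrArg Units.val h1
      rw [Units.val_pow_eq_pow_val, hug, Units.val_one, two_mul, pow_add] at hv
      exact hv
    exact mul_self_eq_one_iff.mp h2
  obtain ⟨M, hM⟩ := hdvd
  have hMdvd : M ∣ N := ⟨_, by rw [hM]; ring⟩
  have hM0 : (M : ZMod p) ≠ 0 := hvmod M hMdvd
  have hMz : M ≠ 0 := by
    rintro rfl
    rw [mul_zero] at hM
    exact hNz hM
  have key : ∀ r : ℕ, 2 ≤ r → ∀ a : Fin r → ℤ, N = ∏ j, a j → (∀ j, 1 < |a j|) →
      (∀ j, ((a j : ZMod p)) = (q 0 : ZMod p) ∨ ((a j : ZMod p)) = -(q 0 : ZMod p)) →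
      (∃ r : ℕ, 2 ≤ r ∧ ∃ a : Fin r → ℤ, N = ∏ j, a j ∧ (∀ j, 1 < |a j|) ∧
        ∀ i j, a i ≡ a j [ZMOD (p : ℤ)] ∨ a i ≡ -(a j) [ZMOD (p : ℤ)]) := by
    intro r hr a hprod habs hall
    refine ⟨r, hr, a, hprod, habs, ?_⟩
    intro i j
    simp only [← ZMod.intCast_eq_intCast_iff]
    push_cast
    rcases hall i with h1 | h1 <;> rcases hall j with h2 | h2 <;> rw [h1, h2] <;> simp
  rcases eq_or_lt_of_le (Int.one_le_abs hMz) with hM1 | hM1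
  · -- |M| = 1
    have hMpm : M = 1 ∨ M = -1 := by
      rcases abs_cases M with ⟨h1, _⟩ | ⟨h1, _⟩ <;> omega
    apply key k hk2 (fun j => (if j = 0 then M else 1) * (q j : ℤ))
    · rw [Finset.prod_mul_distrib, Finset.prod_ite_eq' univ (0 : Fin k) (fun _ => M)]
      simp only [mem_univ, if_true]
      rw [hM]; ring
    · intro j
      have h1 : |(if j = 0 then M else 1 : ℤ)| = 1 := by
        rcases hMpm with rfl | rfl <;> split <;> simp
      rw [abs_mul, h1, one_mul, abs_of_nonneg (by positivity)]
      exact_mod_cast (hq j).one_lt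
    · intro j
      rcases eq_or_ne j 0 with rfl | hj
      · simp only [if_pos rfl]
        rcases hMpm with rfl | rfl
        · left; push_cast; ring
        · right; push_cast; ring
      · simp only [if_neg hj, one_mul]
        have := hsame' j 0
        push_cast
        exact this
  · -- 1 < |M|
    have hMu : IsUnit (M : ZMod p) := isUnit_iff_ne_zero.mpr hM0
    obtain ⟨t, hw⟩ := exists_pm hp2 hm hcard u hu2 hMu.unit
    have hMt : (M : ZMod p) = (q 0 : ZMod p) ^ t ∨
        (M : ZMod p) = -((q 0 : ZMod p) ^ t) := by
      rcases hw with h | h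
      · left
        have hv := congrArg Units.val h
        rw [Units.val_zpow_eq_zpow_val, hug, hMu.unit_spec] at hv
        exact hv
      · right
        have hv := congrArg Units.val h
        rw [Units.val_neg, Units.val_zpow_eq_zpow_val, hug, hMu.unit_spec] at hv
        exact hv
    set s0 : ℤ := (t + k - 1) % (m : ℤ) with hs0def
    have hmz : (0 : ℤ) < (m : ℤ) := by exact_mod_cast hm.pos
    have hs0nn : 0 ≤ s0 := Int.emod_nonneg _ (by omega)
    have hs0lt : s0 < (m : ℤ) := Int.emod_lt_of_pos _ hmz
    have hdvd1 : (m : ℤ) ∣ (t + k - 1) - s0 := Int.dvd_self_sub_of_emod_eq rfl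
    have hsex : ∃ s : ℕ, 1 ≤ s ∧ s ≤ m ∧ (m : ℤ) ∣ (t + k - 1) - s := by
      rcases eq_or_ne s0 0 with h0 | h0
      · refine ⟨m, hm.one_lt.le, le_rfl, ?_⟩
        rw [h0, sub_zero] at hdvd1
        simpa using dvd_sub hdvd1 (dvd_refl (m : ℤ))
      · refine ⟨s0.toNat, by omega, by omega, ?_⟩
        rw [Int.toNat_of_nonneg hs0nn]
        exact hdvd1
    obtain ⟨s, hs1, hsm, hcong⟩ := hsex
    have hsk : s ≤ k := hsm.trans hk
    set Q : ℕ → ℤ := fun i => if h : i < k then (q ⟨i, h⟩ : ℤ) else 1 with hQdef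
    apply key (s + 1) (by omega)
      (fun j : Fin (s + 1) => if h : (j : ℕ) < s then Q j else M * ∏ i ∈ Ico s k, Q i)
    · -- product
      rw [Fin.prod_univ_castSucc]
      have h1 : ∀ j : Fin s, (if h : ((j.castSucc : Fin (s+1)) : ℕ) < s then Q j.castSucc
          else M * ∏ i ∈ Ico s k, Q i) = Q j := by
        intro j
        rw [dif_pos]
        · rfl
        · exact j.isLt
      rw [Finset.prod_congr rfl (fun j _ => h1 j), Fin.prod_univ_eq_prod_range (fun i => Q i) s]
      rw [dif_neg (by simp)]
      have h3 : (∏ j : Fin k, (q j : ℤ)) = ∏ i ∈ range k, Q i := by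
        rw [← Fin.prod_univ_eq_prod_range (fun i => Q i) k]
        apply Finset.prod_congr rfl
        intro j _
        rw [hQdef]
        simp only [j.isLt, dif_pos]
      rw [hM, h3, ← Finset.prod_range_mul_prod_Ico Q hsk]
      ring
    · -- sizes
      intro j
      split_ifs with h
      · rw [hQdef]
        simp only [h.trans_le hsk, dif_pos]
        rw [abs_of_nonneg (by positivity)]
        exact_mod_cast (hq _).one_lt
      · have hP1 : 1 ≤ ∏ i ∈ Ico s k, Q i := by
          have hpos : 0 < ∏ i ∈ Ico s k, Q i := by
            apply Finset.prod_pos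
            intro i _
            rw [hQdef]
            dsimp only
            split_ifs with hik
            · exact_mod_cast (hq _).pos
            · norm_num
          omega
        rw [abs_mul]
        calc 1 < |M| := hM1
          _ ≤ |M| * |∏ i ∈ Ico s k, Q i| :=
            le_mul_of_one_le_right (abs_nonneg M) (by rw [abs_of_nonneg (by linarith)]; exact hP1)
    · -- classes
      intro j
      split_ifs with h
      · rw [hQdef]
        simp only [h.trans_le hsk, dif_pos]
        have := hsame' ⟨(j : ℕ), h.trans_le hsk⟩ 0
        push_cast
        exact this
      · push_cast
        have hprodpm : (∏ i ∈ Ico s k, ((Q i : ℤ) : ZMod p)) =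
            (q 0 : ZMod p) ^ (k - s) ∨ (∏ i ∈ Ico s k, ((Q i : ℤ) : ZMod p)) =
            -((q 0 : ZMod p) ^ (k - s)) := by
          have := prod_pm ((q 0 : ZMod p)) (Ico s k) (fun i => ((Q i : ℤ) : ZMod p)) ?_
          · rwa [Nat.card_Ico] at this
          · intro i hi
            have hik : i < k := (Finset.mem_Ico.mp hi).2
            rw [hQdef]
            simp only [hik, dif_pos]
            have := hsame' ⟨i, hik⟩ 0
            push_cast
            exact this
        have hmul := pm_mul hMt hprodpm
        refine pm_congr hmul ?_
        have hzg : (q 0 : ZMod p) ≠ 0 := hg0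
        have hpoweq : (q 0 : ZMod p) ^ t * (q 0 : ZMod p) ^ (k - s) =
            (q 0 : ZMod p) ^ (t + ((k - s : ℕ) : ℤ)) := by
          rw [zpow_add₀ hzg, zpow_natCast]
        rw [hpoweq]
        have he : (m : ℤ) ∣ (t + ((k - s : ℕ) : ℤ)) - 1 := by
          have hcast : ((k - s : ℕ) : ℤ) = (k : ℤ) - s := by
            push_cast [Nat.cast_sub hsk]
            ring
          rw [hcast]
          have heq : t + ((k : ℤ) - s) - 1 = (t + k - 1) - s := by ring
          rw [heq]
          exact hcong
        obtain ⟨c, hc⟩ := he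
        have hexp : t + ((k - s : ℕ) : ℤ) = 1 + (m : ℤ) * c := by linarith
        rw [hexp, zpow_add₀ hzg, zpow_one, zpow_mul, zpow_natCast]
        rcases hgm with h | h
        · rw [h, one_zpow, mul_one]
          left; rfl
        · rw [h]
          rcases Int.even_or_odd c with hc2 | hc2
          · rw [hc2.neg_one_zpow, mul_one]
            left; rfl
          · rw [hc2.neg_one_zpow]
            right; ring
end

section
/- Let p be a prime and t a positive integer. The integer x = p·t admits a nontrivial factorization x = a₁···a_r (r ≥ 2, each |a_j| > 1) with all a_i ≡ a_j (mod p) if and only if p divides t... Contrapositive form: if p ∤ t, then in any factorization pt = a·b with |a|,|b| > 1 and a ≡ b (mod p), we reach a contradiction; hence pt is a τ_(p)-atom. -/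
/-- For p prime and t > 0, the integer pt admits a nontrivial factorization
pt = a₁ ⋯ a_r (r ≥ 2, each |a_j| > 1) with all factors pairwise congruent
mod p if and only if p divides t. -/
theorem stmt_19 (p t : ℕ) (hp : Nat.Prime p) (ht : 0 < t) :
    (∃ r : ℕ, 2 ≤ r ∧ ∃ a : Fin r → ℤ, (p : ℤ) * t = ∏ j, a j ∧
      (∀ j, 1 < |a j|) ∧ ∀ i j, a i ≡ a j [ZMOD (p : ℤ)]) ↔ p ∣ t := by
  have hpz : Prime (p : ℤ) := Nat.prime_iff_prime_int.mp hp
  constructor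
  · rintro ⟨r, hr, a, hprod, habs, hcong⟩
    -- p divides some factor
    have hdvdprod : (p : ℤ) ∣ ∏ j, a j := hprod ▸ ⟨(t : ℤ), rfl⟩
    obtain ⟨i, _, hi⟩ := hpz.exists_mem_finset_dvd hdvdprod
    have hall : ∀ j, (p : ℤ) ∣ a j := by
      intro j
      simpa using dvd_add (hcong i j).dvd hi
    have hpow : (p : ℤ) ^ r ∣ (p : ℤ) * t := by
      rw [hprod]
      calc (p : ℤ) ^ r = ∏ _j : Fin r, (p : ℤ) := by
            simp [Finset.prod_const]
        _ ∣ ∏ j, a j := Finset.prod_dvd_prod_of_dvd _ _ (fun j _ => hall j)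
    have h2 : (p : ℤ) ^ 2 ∣ (p : ℤ) * t := dvd_trans (pow_dvd_pow _ hr) hpow
    have hpt : (p : ℤ) ∣ (t : ℤ) := by
      rcases h2 with ⟨c, hc⟩
      have hp0 : (p : ℤ) ≠ 0 := by exact_mod_cast hp.ne_zero
      refine ⟨c, ?_⟩
      have : (p : ℤ) * (t : ℤ) = (p : ℤ) * ((p : ℤ) * c) := by ring_nf; ring_nf at hc; linarith
      exact mul_left_cancel₀ hp0 this
    exact_mod_cast hpt
  · rintro ⟨s, rfl⟩
    have hs : 0 < s := Nat.pos_of_ne_zero (by rintro rfl; simp at ht)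
    have hp2 : 2 ≤ p := hp.two_le
    refine ⟨2, le_refl 2, ![(p : ℤ), ((p * s : ℕ) : ℤ)], ?_, ?_, ?_⟩
    · rw [Fin.prod_univ_two, Matrix.cons_val_zero, Matrix.cons_val_one, Matrix.cons_val_zero]
    · intro j
      fin_cases j
      · show 1 < |(p : ℤ)|
        rw [abs_of_nonneg (Int.natCast_nonneg p)]
        exact_mod_cast hp2
      · show 1 < |((p * s : ℕ) : ℤ)|
        rw [abs_of_nonneg (Int.natCast_nonneg _)]
        exact_mod_cast le_trans hp2 (Nat.le_mul_of_pos_right p hs)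
    · have h0 : ∀ k : Fin 2, (![(p : ℤ), ((p * s : ℕ) : ℤ)] k) ≡ 0 [ZMOD (p : ℤ)] := by
        intro k
        fin_cases k
        · show (p : ℤ) ≡ 0 [ZMOD (p : ℤ)]
          exact Int.modEq_zero_iff_dvd.mpr ⟨1, by simp⟩
        · show ((p * s : ℕ) : ℤ) ≡ 0 [ZMOD (p : ℤ)]
          exact Int.modEq_zero_iff_dvd.mpr ⟨(s : ℤ), by push_cast; ring⟩
      intro i j
      exact (h0 i).trans (h0 j).symm
end
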